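/- Define B(n,k) := Σ_{j=0}^{min(n,k)} (j!)² · S(n+1, j+1) · S(k+1, j+1). Then for all integers n ≥ 0 and m > k ≥ 0, Σ_{ℓ=0}^{m} (-1)^ℓ · c(m+1, ℓ+1) · B(n+ℓ, k) = 0. -/

import Mathlib

open Finset

/-- Stirling numbers of the second kind. -/
def stirling2 : ℕ → ℕ → ℕ
  | 0, 0 => 1
  | 0, _ + 1 => 0
  | _ + 1, 0 => 0
  | n + 1, k + 1 => (k + 1) * stirling2 n (k + 1) + stirling2 n k

/-- Unsigned Stirling numbers of the first kind. -/
def stirling1 : ℕ → ℕ → ℕ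
  | 0, 0 => 1
  | 0, _ + 1 => 0
  | _ + 1, 0 => 0
  | n + 1, k + 1 => n * stirling1 n (k + 1) + stirling1 n k

/-- The poly-Bernoulli number B_n^{(-k)}. -/
def polyBernoulli (n k : ℕ) : ℕ :=
  ∑ j ∈ Finset.range (min n k + 1),
    j.factorial ^ 2 * stirling2 (n + 1) (j + 1) * stirling2 (k + 1) (j + 1)

lemma stirling2_eq_zero : ∀ n k : ℕ, n < k → stirling2 n k = 0 := by
  intro n
  induction n with
  | zero =>
    intro k hk
    cases k with
    | zero => omega
    | succ j => rfl
  | succ n ih =>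
    intro k hk
    cases k with
    | zero => omega
    | succ j =>
      show (j + 1) * stirling2 n (j + 1) + stirling2 n j = 0
      rw [ih (j + 1) (by omega), ih j (by omega)]
      simp

lemma stirling1_eq_zero : ∀ n k : ℕ, n < k → stirling1 n k = 0 := by
  intro n
  induction n with
  | zero =>
    intro k hk
    cases k with
    | zero => omega
    | succ j => rfl
  | succ n ih =>
    intro k hk
    cases k with
    | zero => omega
    | succ j =>
      show n * stirling1 n (j + 1) + stirling1 n j = 0
      rw [ih (j + 1) (by omega), ih j (by omega)]
      simp

def Lop (m : ℕ) (f : ℕ → ℤ) : ℤ :=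
  ∑ l ∈ range (m + 1), (-1 : ℤ) ^ l * stirling1 (m + 1) (l + 1) * f l

lemma Lop_succ (m : ℕ) (f : ℕ → ℤ) :
    Lop (m + 1) f = Lop m (fun l => ((m : ℤ) + 1) * f l - f (l + 1)) := by
  unfold Lop
  have h1 : ∀ l : ℕ, (stirling1 (m + 2) (l + 1) : ℤ)
      = ((m : ℤ) + 1) * stirling1 (m + 1) (l + 1) + stirling1 (m + 1) l := by
    intro l
    show ((((m + 1) * stirling1 (m + 1) (l + 1) + stirling1 (m + 1) l : ℕ)) : ℤ) = _
    push_cast; ring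
  have step1 : ∑ l ∈ range (m + 2), (-1 : ℤ) ^ l * stirling1 (m + 2) (l + 1) * f l
      = ∑ l ∈ range (m + 2),
          (((m : ℤ) + 1) * ((-1 : ℤ) ^ l * stirling1 (m + 1) (l + 1) * f l)
           + (-1 : ℤ) ^ l * stirling1 (m + 1) l * f l) := by
    apply Finset.sum_congr rfl
    intro l _
    rw [h1]; ring
  rw [step1, Finset.sum_add_distrib]
  rw [Finset.sum_range_succ
    (fun l => ((m : ℤ) + 1) * ((-1 : ℤ) ^ l * stirling1 (m + 1) (l + 1) * f l))]
  rw [Finset.sum_range_succ' (fun l => (-1 : ℤ) ^ l * stirling1 (m + 1) l * f l)]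
  rw [stirling1_eq_zero (m + 1) (m + 2) (by omega)]
  have h0 : stirling1 (m + 1) 0 = 0 := rfl
  rw [h0]
  have hneg : ∀ l : ℕ, (-1 : ℤ) ^ (l + 1) * stirling1 (m + 1) (l + 1) * f (l + 1)
      = -((-1 : ℤ) ^ l * stirling1 (m + 1) (l + 1) * f (l + 1)) := by
    intro l; ring
  simp only [hneg, Finset.sum_neg_distrib, Nat.cast_zero, mul_zero, zero_mul, add_zero,
    pow_zero, one_mul]
  rw [← Finset.sum_neg_distrib, ← Finset.sum_add_distrib]
  apply Finset.sum_congr rfl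
  intro l _
  ring

lemma key : ∀ (m n : ℕ) (a : ℕ → ℤ), (∀ r, m < r → a r = 0) →
    Lop m (fun l => ∑ r ∈ range (m + 2), a r * (stirling2 (n + l + 1) r : ℤ)) = 0 := by
  intro m
  induction m with
  | zero =>
    intro n a ha
    have : Lop 0 (fun l => ∑ r ∈ range 2, a r * (stirling2 (n + l + 1) r : ℤ))
        = ∑ r ∈ range 2, a r * (stirling2 (n + 0 + 1) r : ℤ) := by
      simp [Lop, stirling1]
    rw [this]
    rw [Finset.sum_range_succ, Finset.sum_range_succ, Finset.sum_range_zero]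
    rw [ha 1 (by omega)]
    have h2 : stirling2 (n + 0 + 1) 0 = 0 := rfl
    rw [h2]
    simp
  | succ m ih =>
    intro n a ha
    rw [Lop_succ]
    have hfun : (fun l => ((m : ℤ) + 1) *
          (∑ r ∈ range (m + 1 + 2), a r * (stirling2 (n + l + 1) r : ℤ))
          - ∑ r ∈ range (m + 1 + 2), a r * (stirling2 (n + (l + 1) + 1) r : ℤ))
        = fun l => ∑ r ∈ range (m + 2),
            (((m : ℤ) + 1 - r) * a r - a (r + 1)) * (stirling2 (n + l + 1) r : ℤ) := by
      funext l
      have hA : ∑ r ∈ range (m + 3), a r * (stirling2 (n + l + 1) r : ℤ)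
          = ∑ r ∈ range (m + 2), a r * (stirling2 (n + l + 1) r : ℤ) := by
        rw [Finset.sum_range_succ, ha (m + 2) (by omega)]
        simp
      have hB : ∑ r ∈ range (m + 3), a r * (stirling2 (n + l + 2) r : ℤ)
          = ∑ j ∈ range (m + 2), a (j + 1) *
              (((j : ℤ) + 1) * stirling2 (n + l + 1) (j + 1) + stirling2 (n + l + 1) j) := by
        rw [Finset.sum_range_succ' (fun r => a r * (stirling2 (n + l + 2) r : ℤ))]
        have h20 : stirling2 (n + l + 2) 0 = 0 := rfl
        rw [h20]
        simp only [Nat.cast_zero, mul_zero, add_zero]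
        apply Finset.sum_congr rfl
        intro j _
        have : (stirling2 (n + l + 2) (j + 1) : ℤ)
            = ((j : ℤ) + 1) * stirling2 (n + l + 1) (j + 1) + stirling2 (n + l + 1) j := by
          show (((j + 1) * stirling2 (n + l + 1) (j + 1) + stirling2 (n + l + 1) j : ℕ) : ℤ) = _
          push_cast; ring
        rw [this]
      have hC : ∑ j ∈ range (m + 2), a (j + 1) * (((j : ℤ) + 1) * stirling2 (n + l + 1) (j + 1))
          = ∑ r ∈ range (m + 2), (r : ℤ) * a r * stirling2 (n + l + 1) r := by
        have e1 : ∑ r ∈ range (m + 3), (r : ℤ) * a r * stirling2 (n + l + 1) r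
            = ∑ j ∈ range (m + 2),
                a (j + 1) * (((j : ℤ) + 1) * stirling2 (n + l + 1) (j + 1)) := by
          rw [Finset.sum_range_succ' (fun r => (r : ℤ) * a r * stirling2 (n + l + 1) r)]
          simp only [Nat.cast_zero, zero_mul, add_zero]
          apply Finset.sum_congr rfl
          intro j _
          push_cast; ring
        have e2 : ∑ r ∈ range (m + 3), (r : ℤ) * a r * stirling2 (n + l + 1) r
            = ∑ r ∈ range (m + 2), (r : ℤ) * a r * stirling2 (n + l + 1) r := by
          rw [Finset.sum_range_succ, ha (m + 2) (by omega)]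
          simp
        rw [← e1, e2]
      have hD : ∑ j ∈ range (m + 2), a (j + 1) * (stirling2 (n + l + 1) j : ℤ)
          = ∑ r ∈ range (m + 2), a (r + 1) * (stirling2 (n + l + 1) r : ℤ) := rfl
      show ((m : ℤ) + 1) * (∑ r ∈ range (m + 3), a r * (stirling2 (n + l + 1) r : ℤ))
          - ∑ r ∈ range (m + 3), a r * (stirling2 (n + l + 2) r : ℤ) = _
      rw [hA, hB]
      have hsplit : ∑ j ∈ range (m + 2), a (j + 1) *
            (((j : ℤ) + 1) * stirling2 (n + l + 1) (j + 1) + stirling2 (n + l + 1) j)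
          = (∑ j ∈ range (m + 2), a (j + 1) * (((j : ℤ) + 1) * stirling2 (n + l + 1) (j + 1)))
            + ∑ j ∈ range (m + 2), a (j + 1) * (stirling2 (n + l + 1) j : ℤ) := by
        rw [← Finset.sum_add_distrib]
        apply Finset.sum_congr rfl
        intro j _; ring
      rw [hsplit, hC, hD, Finset.mul_sum]
      rw [← Finset.sum_add_distrib, ← Finset.sum_sub_distrib]
      apply Finset.sum_congr rfl
      intro r _; ring
    rw [hfun]
    apply ih n (fun r => ((m : ℤ) + 1 - r) * a r - a (r + 1))
    intro r hr
    rcases Nat.lt_or_ge (m + 1) r with h | h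
    · rw [ha r (by omega), ha (r + 1) (by omega)]; ring
    · have : r = m + 1 := by omega
      subst this
      rw [ha (m + 2) (by omega)]
      push_cast; ring

theorem stmt14 (n k m : ℕ) (hk : k < m) :
    ∑ l ∈ Finset.range (m + 1),
      (-1 : ℤ) ^ l * stirling1 (m + 1) (l + 1) * polyBernoulli (n + l) k = 0 := by
  set a : ℕ → ℤ := fun r => match r with
    | 0 => 0
    | j + 1 => if j ≤ k then ((j.factorial ^ 2 * stirling2 (k + 1) (j + 1) : ℕ) : ℤ) else 0
    with ha_def
  have ha : ∀ r, m < r → a r = 0 := by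
    intro r hr
    match r with
    | 0 => omega
    | j + 1 =>
      show (if j ≤ k then ((j.factorial ^ 2 * stirling2 (k + 1) (j + 1) : ℕ) : ℤ) else 0) = 0
      rw [if_neg (by omega)]
  have hpB : ∀ l : ℕ, (polyBernoulli (n + l) k : ℤ)
      = ∑ r ∈ range (m + 2), a r * (stirling2 (n + l + 1) r : ℤ) := by
    intro l
    rw [Finset.sum_range_succ' (fun r => a r * (stirling2 (n + l + 1) r : ℤ))]
    have h0 : a 0 = 0 := rfl
    rw [h0]
    simp only [zero_mul, add_zero]
    have hstep : ∀ j ∈ range (m + 1), a (j + 1) * (stirling2 (n + l + 1) (j + 1) : ℤ)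
        = if j ≤ k then ((j.factorial ^ 2 * stirling2 (n + l + 1) (j + 1)
            * stirling2 (k + 1) (j + 1) : ℕ) : ℤ) else 0 := by
      intro j _
      show (if j ≤ k then ((j.factorial ^ 2 * stirling2 (k + 1) (j + 1) : ℕ) : ℤ) else 0)
          * (stirling2 (n + l + 1) (j + 1) : ℤ) = _
      by_cases h : j ≤ k
      · rw [if_pos h, if_pos h]; push_cast; ring
      · rw [if_neg h, if_neg h]; ring
    rw [Finset.sum_congr rfl hstep]
    rw [← Finset.sum_filter]
    have hfilter : (range (m + 1)).filter (fun j => j ≤ k) = range (k + 1) := by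
      ext j
      simp [Finset.mem_filter, Finset.mem_range]
      omega
    rw [hfilter, ← Nat.cast_sum]
    congr 1
    unfold polyBernoulli
    rcases le_or_gt k (n + l) with h | h
    · rw [min_eq_right h]
    · rw [min_eq_left h.le]
      apply Finset.sum_subset (Finset.range_subset_range.2 (by omega : n + l + 1 ≤ k + 1))
      intro j _ hj
      simp only [Finset.mem_range] at hj
      rw [stirling2_eq_zero (n + l + 1) (j + 1) (by omega)]
      simp
  have hL : ∑ l ∈ Finset.range (m + 1),
      (-1 : ℤ) ^ l * stirling1 (m + 1) (l + 1) * polyBernoulli (n + l) k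
      = Lop m (fun l => ∑ r ∈ range (m + 2), a r * (stirling2 (n + l + 1) r : ℤ)) := by
    unfold Lop
    apply Finset.sum_congr rfl
    intro l _
    rw [hpB l]
  rw [hL]
  exact key m n a ha
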